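/- Suppose e : ℝ → ℝ satisfies ė(t) = −l₀·e(t) + σ(t) with l₀ > 0, and |σ(t)| ≤ C + π(t) for all t ≥ 0 where C ≥ 0 and π(t) is a nonnegative exponentially decaying function. Then |e(t)| ≤ C/l₀ + π_e(t) for all t ≥ 0, where π_e is an exponentially decaying term depending on initial conditions; in particular limsup_{t→∞} |e(t)| ≤ C/l₀. -/

import Mathlib

open Real Filter

/-- One-sided comparison: if f' = -l₀ f + τ with τ t ≤ C + Kb e^{-ν t}, 0 < ν < l₀,
then f t ≤ C/l₀ + Kb/(l₀-ν) e^{-ν t} + (f 0 - C/l₀ - Kb/(l₀-ν)) e^{-l₀ t}. -/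
lemma one_sided_bound (f τ : ℝ → ℝ) (l₀ C Kb ν : ℝ)
    (hl₀ : 0 < l₀) (hν : 0 < ν) (hνl : ν < l₀)
    (hdyn : ∀ t ≥ 0, HasDerivAt f (-l₀ * f t + τ t) t)
    (hτ : ∀ t ≥ 0, τ t ≤ C + Kb * Real.exp (-ν * t)) :
    ∀ t ≥ 0, f t ≤ C / l₀ + Kb / (l₀ - ν) * Real.exp (-ν * t)
      + (f 0 - C / l₀ - Kb / (l₀ - ν)) * Real.exp (-l₀ * t) := by
  have hμ : 0 < l₀ - ν := by linarith
  set F : ℝ → ℝ := fun t => C / l₀ * Real.exp (l₀ * t)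
      + Kb / (l₀ - ν) * Real.exp ((l₀ - ν) * t) - Real.exp (l₀ * t) * f t with hF
  have hderivF : ∀ t ≥ 0, HasDerivAt F
      (C * Real.exp (l₀ * t) + Kb * Real.exp ((l₀ - ν) * t)
        - Real.exp (l₀ * t) * τ t) t := by
    intro t ht
    have h1 : HasDerivAt (fun t => Real.exp (l₀ * t)) (l₀ * Real.exp (l₀ * t)) t := by
      simpa [mul_comm] using ((hasDerivAt_id t).const_mul l₀).exp
    have h2 : HasDerivAt (fun t => Real.exp ((l₀ - ν) * t))
        ((l₀ - ν) * Real.exp ((l₀ - ν) * t)) t := by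
      simpa [mul_comm] using ((hasDerivAt_id t).const_mul (l₀ - ν)).exp
    have h3 : HasDerivAt (fun t => Real.exp (l₀ * t) * f t)
        (l₀ * Real.exp (l₀ * t) * f t + Real.exp (l₀ * t) * (-l₀ * f t + τ t)) t :=
      h1.mul (hdyn t ht)
    have := ((h1.const_mul (C / l₀)).add (h2.const_mul (Kb / (l₀ - ν)))).sub h3
    refine this.congr_deriv ?_
    field_simp
    ring
  have hmono : MonotoneOn F (Set.Ici (0:ℝ)) := by
    apply monotoneOn_of_deriv_nonneg (convex_Ici 0)
    · intro t ht
      exact ((hderivF t ht).continuousAt).continuousWithinAt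
    · intro t ht
      rw [interior_Ici] at ht
      exact (hderivF t (le_of_lt ht)).differentiableAt.differentiableWithinAt
    · intro t ht
      rw [interior_Ici] at ht
      rw [(hderivF t (le_of_lt ht)).deriv]
      have hE : (0:ℝ) < Real.exp (l₀ * t) := Real.exp_pos _
      have hτt := hτ t (le_of_lt ht)
      have : Real.exp (l₀ * t) * τ t ≤ Real.exp (l₀ * t) * (C + Kb * Real.exp (-ν * t)) :=
        mul_le_mul_of_nonneg_left hτt hE.le
      have hid : Real.exp (l₀ * t) * Real.exp (-ν * t) = Real.exp ((l₀ - ν) * t) := by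
        rw [← Real.exp_add]; ring_nf
      have hexp : Real.exp (l₀ * t) * (C + Kb * Real.exp (-ν * t))
          = C * Real.exp (l₀ * t) + Kb * Real.exp ((l₀ - ν) * t) := by
        linear_combination Kb * hid
      linarith
  intro t ht
  have h0 : F 0 ≤ F t := hmono (Set.self_mem_Ici) ht ht
  simp only [hF, mul_zero, Real.exp_zero, mul_one] at h0
  have hE1 : Real.exp (-l₀ * t) * Real.exp (l₀ * t) = 1 := by
    rw [← Real.exp_add]; ring_nf; exact Real.exp_zero
  have hE2 : Real.exp (-l₀ * t) * Real.exp ((l₀ - ν) * t) = Real.exp (-ν * t) := by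
    rw [← Real.exp_add]; ring_nf
  have hpos : (0:ℝ) < Real.exp (-l₀ * t) := Real.exp_pos _
  rw [one_mul] at h0
  have key := mul_le_mul_of_nonneg_left h0 hpos.le
  have h1 : Real.exp (-l₀ * t) * (C / l₀ * Real.exp (l₀ * t)
      + Kb / (l₀ - ν) * Real.exp ((l₀ - ν) * t) - Real.exp (l₀ * t) * f t)
      = C / l₀ + Kb / (l₀ - ν) * Real.exp (-ν * t) - f t := by
    linear_combination (C / l₀ - f t) * hE1 + Kb / (l₀ - ν) * hE2
  rw [h1] at key
  have h2 : (f 0 - C / l₀ - Kb / (l₀ - ν)) * Real.exp (-l₀ * t)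
      = -(Real.exp (-l₀ * t) * (C / l₀ + Kb / (l₀ - ν) - f 0)) := by ring
  linarith

/-- Error dynamics cascade step: if ė = −l₀e + σ and |σ| ≤ C + K e^{−λt},
then |e(t)| ≤ C/l₀ + exponentially decaying term, and
limsup_{t→∞} |e(t)| ≤ C/l₀. -/
theorem stmt_6 (e σ : ℝ → ℝ) (l₀ C K lam : ℝ)
    (hl₀ : 0 < l₀) (hC : 0 ≤ C) (hK : 0 ≤ K) (hlam : 0 < lam)
    (hdyn : ∀ t ≥ 0, HasDerivAt e (-l₀ * e t + σ t) t)
    (hσ : ∀ t ≥ 0, |σ t| ≤ C + K * Real.exp (-lam * t)) :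
    (∃ K' ≥ 0, ∃ lam' > 0, ∀ t ≥ 0,
        |e t| ≤ C / l₀ + K' * Real.exp (-lam' * t)) ∧
    Filter.limsup (fun t => |e t|) Filter.atTop ≤ C / l₀ := by
  set ν : ℝ := min lam (l₀ / 2) with hν
  have hν0 : 0 < ν := lt_min hlam (by linarith)
  have hνlam : ν ≤ lam := min_le_left _ _
  have hνl : ν < l₀ := lt_of_le_of_lt (min_le_right _ _) (by linarith)
  have hμ : 0 < l₀ - ν := by linarith
  have hτbound : ∀ t ≥ 0, C + K * Real.exp (-lam * t) ≤ C + K * Real.exp (-ν * t) := by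
    intro t ht
    have : Real.exp (-lam * t) ≤ Real.exp (-ν * t) :=
      Real.exp_le_exp.mpr (by nlinarith)
    nlinarith
  have hup : ∀ t ≥ 0, e t ≤ C / l₀ + K / (l₀ - ν) * Real.exp (-ν * t)
      + (e 0 - C / l₀ - K / (l₀ - ν)) * Real.exp (-l₀ * t) :=
    one_sided_bound e σ l₀ C K ν hl₀ hν0 hνl hdyn
      (fun t ht => le_trans (le_trans (le_abs_self _) (hσ t ht)) (hτbound t ht))
  have hdown : ∀ t ≥ 0, -e t ≤ C / l₀ + K / (l₀ - ν) * Real.exp (-ν * t)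
      + (-e 0 - C / l₀ - K / (l₀ - ν)) * Real.exp (-l₀ * t) := by
    have := one_sided_bound (fun t => -e t) (fun t => -σ t) l₀ C K ν hl₀ hν0 hνl
      (fun t ht => by
        have := (hdyn t ht).neg
        refine this.congr_deriv ?_
        ring)
      (fun t ht => le_trans (le_trans (neg_le_abs _) (hσ t ht)) (hτbound t ht))
    simpa using this
  set B0 : ℝ := C / l₀ + K / (l₀ - ν) with hB0
  have hB0nn : 0 ≤ B0 := by positivity
  set K' : ℝ := K / (l₀ - ν) + (|e 0| + B0) with hK'
  have hK'nn : 0 ≤ K' := by positivity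
  have hbound : ∀ t ≥ 0, |e t| ≤ C / l₀ + K' * Real.exp (-ν * t) := by
    intro t ht
    have hexp : Real.exp (-l₀ * t) ≤ Real.exp (-ν * t) :=
      Real.exp_le_exp.mpr (by nlinarith)
    have hep : (0:ℝ) < Real.exp (-l₀ * t) := Real.exp_pos _
    have habs : |e 0| ≥ e 0 := le_abs_self _
    have habs' : |e 0| ≥ -e 0 := neg_le_abs _
    rw [abs_le]
    constructor
    · have := hdown t ht
      nlinarith [hup t ht]
    · have := hup t ht
      nlinarith
  refine ⟨⟨K', hK'nn, ν, hν0, hbound⟩, ?_⟩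
  have htend : Tendsto (fun t => C / l₀ + K' * Real.exp (-ν * t)) atTop (nhds (C / l₀)) := by
    have h1 : Tendsto (fun t : ℝ => -ν * t) atTop atBot :=
      Tendsto.const_mul_atTop_of_neg (neg_neg_iff_pos.mpr hν0) tendsto_id
    have h2 : Tendsto (fun t : ℝ => K' * Real.exp (-ν * t)) atTop (nhds 0) := by
      simpa using (Real.tendsto_exp_atBot.comp h1).const_mul K'
    simpa using tendsto_const_nhds.add h2
  have hev : ∀ᶠ t in atTop, |e t| ≤ C / l₀ + K' * Real.exp (-ν * t) :=
    eventually_atTop.mpr ⟨0, fun t ht => hbound t ht⟩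
  calc Filter.limsup (fun t => |e t|) Filter.atTop
      ≤ Filter.limsup (fun t => C / l₀ + K' * Real.exp (-ν * t)) Filter.atTop := by
        exact Filter.limsup_le_limsup hev
          (isCoboundedUnder_le_of_eventually_le atTop
            (eventually_atTop.mpr ⟨0, fun t ht => abs_nonneg _⟩))
          htend.isBoundedUnder_le
    _ = C / l₀ := htend.limsup_eq
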